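/- Let G = (V, E) be a connected simple undirected graph on N vertices, and let σ : ℝ → ℝ be an activation function for which there exist t₀ ∈ ℝ and an open interval U containing t₀ such that σ is continuously differentiable on U and σ'(t₀) ≠ 0. Then for every invertible matrix M ∈ GL_N(ℝ), every nonempty compact set K ⊂ ℝ^N, and every ε > 0, there exists a finite-depth feedforward σ-network N : ℝ^N → ℝ^N, whose weight matrix in every layer is G-sparse (each layer has the form z ↦ σ(W z + b) componentwise, composed with a final affine map, with every weight matrix W being G-sparse), such that sup_{x ∈ K} ‖N(x) − M x‖_∞ < ε. -/

import Mathlib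

set_option maxHeartbeats 1000000



open Matrix

/-- A matrix `W` is `G`-sparse if, for `i ≠ j`, the off-diagonal entries `W i j`
may be nonzero only when `{i, j}` is an edge of `G` (diagonal entries are free). -/
def IsGSparse {N : ℕ} (G : SimpleGraph (Fin N)) (W : Matrix (Fin N) (Fin N) ℝ) : Prop :=
  ∀ i j : Fin N, i ≠ j → ¬ G.Adj i j → W i j = 0

/-- One `σ`-layer: `z ↦ σ (W z + b)`, with `σ` applied componentwise. -/
def sigmaLayer {N : ℕ} (σ : ℝ → ℝ) (W : Matrix (Fin N) (Fin N) ℝ) (b : Fin N → ℝ)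
    (z : Fin N → ℝ) : Fin N → ℝ :=
  fun i => σ ((W.mulVec z + b) i)

/-- Forward pass through `m` `σ`-layers. -/
def sigmaForward {N : ℕ} (σ : ℝ → ℝ) : (m : ℕ) → (Fin m → Matrix (Fin N) (Fin N) ℝ) →
    (Fin m → (Fin N → ℝ)) → (Fin N → ℝ) → (Fin N → ℝ)
  | 0, _, _, x => x
  | m + 1, W, b, x =>
      sigmaLayer σ (W (Fin.last m)) (b (Fin.last m))
        (sigmaForward σ m (fun ℓ => W ℓ.castSucc) (fun ℓ => b ℓ.castSucc) x)

lemma isGSparse_smul {N : ℕ} {G : SimpleGraph (Fin N)} {A : Matrix (Fin N) (Fin N) ℝ}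
    (h : IsGSparse G A) (r : ℝ) : IsGSparse G (r • A) := by
  intro i j hij hadj
  simp [h i j hij hadj]

lemma isGSparse_diagonal {N : ℕ} (G : SimpleGraph (Fin N)) (d : Fin N → ℝ) :
    IsGSparse G (diagonal d) := by
  intro i j hij _
  simp [diagonal_apply_ne _ hij]

lemma isGSparse_one {N : ℕ} (G : SimpleGraph (Fin N)) : IsGSparse G (1 : Matrix (Fin N) (Fin N) ℝ) := by
  simpa [Matrix.diagonal_one] using isGSparse_diagonal G (fun _ => (1:ℝ))

lemma isGSparse_transvection {N : ℕ} {G : SimpleGraph (Fin N)} {i j : Fin N}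
    (h : G.Adj i j) (c : ℝ) : IsGSparse G (transvection i j c) := by
  intro a b hab hadj
  have h1 : (1 : Matrix (Fin N) (Fin N) ℝ) a b = 0 := Matrix.one_apply_ne hab
  have h2 : single i j c a b = 0 := by
    by_cases hia : i = a
    · by_cases hjb : j = b
      · exact absurd (hia ▸ hjb ▸ h) hadj
      · exact Matrix.single_apply_of_ne _ _ _ _ _ (by tauto)
    · exact Matrix.single_apply_of_ne _ _ _ _ _ (by tauto)
  simp [transvection, h1, h2]

lemma stdBasisMatrix_neg {N : ℕ} (i j : Fin N) (c : ℝ) :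
    single i j (-c) = - single i j c := by
  ext a b; by_cases hab : i = a ∧ j = b <;> simp [single, hab]

lemma transvection_commutator {N : ℕ} {i v j : Fin N} (hiv : i ≠ v) (hvj : v ≠ j)
    (hij : i ≠ j) (c : ℝ) :
    transvection i v c * transvection v j 1 * transvection i v (-c) * transvection v j (-1)
      = transvection i j c := by
  set A : Matrix (Fin N) (Fin N) ℝ := single i v c with hA
  set B : Matrix (Fin N) (Fin N) ℝ := single v j 1 with hB
  have hAA : A * A = 0 := Matrix.single_mul_single_of_ne _ _ _ _ (Ne.symm hiv) _
  have hBB : B * B = 0 := Matrix.single_mul_single_of_ne _ _ _ _ (Ne.symm hvj) _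
  have hBA : B * A = 0 := Matrix.single_mul_single_of_ne _ _ _ _ (Ne.symm hij) _
  have hAB : A * B = single i j c := by
    rw [hA, hB, Matrix.single_mul_single_same, mul_one]
  have hABA : (A * B) * A = 0 := by rw [hAB]; exact Matrix.single_mul_single_of_ne _ _ _ _ (Ne.symm hij) _
  have hABB : (A * B) * B = 0 := by rw [hAB]; exact Matrix.single_mul_single_of_ne _ _ _ _ (fun h => hvj h.symm) _
  have hAAB : A * (A * B) = 0 := by rw [← mul_assoc, hAA, zero_mul]
  have hBAB : B * (A * B) = 0 := by rw [← mul_assoc, hBA, zero_mul]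
  have e1 : transvection i v c = 1 + A := rfl
  have e2 : transvection v j 1 = 1 + B := rfl
  have e3 : transvection i v (-c) = 1 - A := by
    rw [transvection, hA, stdBasisMatrix_neg, sub_eq_add_neg]
  have e4 : transvection v j (-1) = 1 - B := by
    rw [transvection, hB, stdBasisMatrix_neg, sub_eq_add_neg]
  rw [e1, e2, e3, e4, transvection, ← hAB]
  noncomm_ring [hAA, hBB, hBA, hABA, hABB, hAAB, hBAB]


lemma transvec_factor {N : ℕ} {G : SimpleGraph (Fin N)} :
    ∀ {i j : Fin N}, G.Walk i j → i ≠ j → ∀ c : ℝ,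
      ∃ L : List (Matrix (Fin N) (Fin N) ℝ),
        (∀ A ∈ L, IsGSparse G A) ∧ L.prod = transvection i j c := by
  intro i j w
  induction w with
  | nil => intro h; exact absurd rfl h
  | @cons i v j hadj p ih =>
    intro hij c
    by_cases hvj : v = j
    · subst hvj
      exact ⟨[transvection i v c], by simpa using isGSparse_transvection hadj c, by simp⟩
    · obtain ⟨L1, hL1, hL1p⟩ := ih hvj 1
      obtain ⟨L2, hL2, hL2p⟩ := ih hvj (-1)
      have hiv : i ≠ v := G.ne_of_adj hadj
      refine ⟨[transvection i v c] ++ L1 ++ [transvection i v (-c)] ++ L2, ?_, ?_⟩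
      · intro A hA
        simp only [List.mem_append, List.mem_singleton] at hA
        rcases hA with ((hA | hA) | hA) | hA
        · exact hA ▸ isGSparse_transvection hadj c
        · exact hL1 A hA
        · exact hA ▸ isGSparse_transvection hadj (-c)
        · exact hL2 A hA
      · rw [List.prod_append, List.prod_append, List.prod_append, List.prod_singleton,
          List.prod_singleton, hL1p, hL2p]
        exact transvection_commutator hiv hvj hij c

lemma transvecStruct_factor {N : ℕ} {G : SimpleGraph (Fin N)} (hG : G.Connected)
    (t : TransvectionStruct (Fin N) ℝ) :
    ∃ L : List (Matrix (Fin N) (Fin N) ℝ),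
      (∀ A ∈ L, IsGSparse G A) ∧ L.prod = t.toMatrix := by
  obtain ⟨w⟩ := hG.preconnected t.i t.j
  exact transvec_factor w t.hij t.c

lemma transvecList_factor {N : ℕ} {G : SimpleGraph (Fin N)} (hG : G.Connected)
    (lt : List (TransvectionStruct (Fin N) ℝ)) :
    ∃ L : List (Matrix (Fin N) (Fin N) ℝ),
      (∀ A ∈ L, IsGSparse G A) ∧ L.prod = (lt.map TransvectionStruct.toMatrix).prod := by
  induction lt with
  | nil => exact ⟨[], by simp, by simp⟩
  | cons t lt ih =>
    obtain ⟨L1, hL1, hL1p⟩ := transvecStruct_factor hG t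
    obtain ⟨L2, hL2, hL2p⟩ := ih
    refine ⟨L1 ++ L2, ?_, ?_⟩
    · intro A hA
      rcases List.mem_append.mp hA with h | h
      · exact hL1 A h
      · exact hL2 A h
    · rw [List.prod_append, hL1p, hL2p, List.map_cons, List.prod_cons]

/-- `G` connected: every matrix is a product of `G`-sparse matrices. -/
lemma matrix_factor {N : ℕ} {G : SimpleGraph (Fin N)} (hG : G.Connected)
    (M : Matrix (Fin N) (Fin N) ℝ) :
    ∃ L : List (Matrix (Fin N) (Fin N) ℝ),
      L ≠ [] ∧ (∀ A ∈ L, IsGSparse G A) ∧ L.prod = M := by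
  obtain ⟨L, L', D, hM⟩ := Matrix.Pivot.exists_list_transvec_mul_diagonal_mul_list_transvec M
  obtain ⟨LA, hLA, hLAp⟩ := transvecList_factor hG L
  obtain ⟨LB, hLB, hLBp⟩ := transvecList_factor hG L'
  refine ⟨LA ++ [diagonal D] ++ LB, by simp, ?_, ?_⟩
  · intro A hA
    simp only [List.mem_append, List.mem_singleton] at hA
    rcases hA with (h | h) | h
    · exact hLA A h
    · exact h ▸ isGSparse_diagonal G D
    · exact hLB A h
  · rw [List.prod_append, List.prod_append, List.prod_singleton, hLAp, hLBp, hM]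


lemma sigmaForward_snoc {N m : ℕ} (σ : ℝ → ℝ) (W : Fin m → Matrix (Fin N) (Fin N) ℝ)
    (Wo : Matrix (Fin N) (Fin N) ℝ) (bb : Fin m → (Fin N → ℝ)) (bo : Fin N → ℝ)
    (x : Fin N → ℝ) :
    sigmaForward σ (m + 1) (Fin.snoc W Wo) (Fin.snoc bb bo) x
      = sigmaLayer σ Wo bo (sigmaForward σ m W bb x) := by
  simp [sigmaForward]

lemma mulVec_norm_le {N : ℕ} (A : Matrix (Fin N) (Fin N) ℝ) (v : Fin N → ℝ) :
    ‖A.mulVec v‖ ≤ (∑ i, ∑ j, |A i j|) * ‖v‖ := by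
  set S := ∑ i, ∑ j, |A i j| with hSdef
  have hS0 : 0 ≤ S := Finset.sum_nonneg fun i _ => Finset.sum_nonneg fun j _ => abs_nonneg _
  rw [pi_norm_le_iff_of_nonneg (mul_nonneg hS0 (norm_nonneg v))]
  intro i
  have h1 : ‖(A.mulVec v) i‖ = |∑ j, A i j * v j| := by
    simp [Matrix.mulVec, dotProduct, Real.norm_eq_abs]
  rw [h1]
  calc |∑ j, A i j * v j| ≤ ∑ j, |A i j * v j| := Finset.abs_sum_le_sum_abs _ _
    _ ≤ ∑ j, |A i j| * ‖v‖ := by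
        refine Finset.sum_le_sum fun j _ => ?_
        rw [abs_mul]
        exact mul_le_mul_of_nonneg_left (norm_le_pi_norm v j) (abs_nonneg _)
    _ = (∑ j, |A i j|) * ‖v‖ := (Finset.sum_mul _ _ _).symm
    _ ≤ S * ‖v‖ := by
        refine mul_le_mul_of_nonneg_right ?_ (norm_nonneg v)
        exact Finset.single_le_sum (f := fun i => ∑ j, |A i j|)
          (fun i _ => Finset.sum_nonneg fun j _ => abs_nonneg _) (Finset.mem_univ i)

lemma compact_mulVec_bound {N : ℕ} {K : Set (Fin N → ℝ)} (hK : IsCompact K)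
    (A : Matrix (Fin N) (Fin N) ℝ) :
    ∃ C : ℝ, 0 ≤ C ∧ ∀ x ∈ K, ‖A.mulVec x‖ ≤ C := by
  have hcont : Continuous (fun x : Fin N → ℝ => A.mulVec x) := by
    have := (Matrix.mulVecLin A).continuous_of_finiteDimensional
    exact continuous_const.matrix_mulVec continuous_id
  obtain ⟨C, hC⟩ := hK.exists_bound_of_continuousOn hcont.continuousOn
  exact ⟨max C 0, le_max_right _ _, fun x hx => (hC x hx).trans (le_max_left _ _)⟩

lemma network_claim {N : ℕ} (G : SimpleGraph (Fin N)) (σ : ℝ → ℝ) (t₀ c : ℝ) (hc : c ≠ 0)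
    (hσ : ∀ η : ℝ, 0 < η → ∃ s₀ > (0:ℝ), ∀ s : ℝ, |s| ≤ s₀ →
        |σ (t₀ + s) - σ t₀ - c * s| ≤ η * |s|) :
    ∀ L : List (Matrix (Fin N) (Fin N) ℝ), L ≠ [] → (∀ A ∈ L, IsGSparse G A) →
    ∀ K : Set (Fin N → ℝ), IsCompact K → ∀ ε : ℝ, 0 < ε →
    ∃ (m : ℕ) (W : Fin m → Matrix (Fin N) (Fin N) ℝ) (bb : Fin m → (Fin N → ℝ)) (s : ℝ),
      s ≠ 0 ∧ (∀ ℓ, IsGSparse G (W ℓ)) ∧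
      ∀ x ∈ K, ‖sigmaForward σ m W bb x - (s • L.prod.mulVec x + fun _ => σ t₀)‖ ≤ ε * |s| := by
  intro L
  induction L with
  | nil => intro h; exact absurd rfl h
  | cons A L' ih =>
    intro _ hsp K hK ε hε
    have hA : IsGSparse G A := hsp A (List.mem_cons_self)
    by_cases hL' : L' = []
    · -- base case: single layer
      subst hL'
      obtain ⟨C, hC0, hC⟩ := compact_mulVec_bound hK A
      have hCpos : (0:ℝ) < C + 1 := by linarith
      set η := ε * |c| / (C + 1) with hηdef
      have hη : 0 < η := by
        apply div_pos (mul_pos hε (abs_pos.mpr hc)) hCpos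
      obtain ⟨s₀, hs₀, hσs⟩ := hσ η hη
      set h := s₀ / (C + 1) with hhdef
      have hh : 0 < h := div_pos hs₀ hCpos
      refine ⟨1, fun _ => h • A, fun _ => fun _ => t₀, c * h, mul_ne_zero hc (ne_of_gt hh), ?_, ?_⟩
      · intro _; exact isGSparse_smul hA h
      · intro x hx
        have hprod : (A :: ([] : List (Matrix (Fin N) (Fin N) ℝ))).prod = A := by simp
        rw [hprod]
        have habs : |c * h| = |c| * h := by rw [abs_mul, abs_of_pos hh]
        rw [habs, pi_norm_le_iff_of_nonneg (by positivity)]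
        intro i
        have hforward : sigmaForward σ 1 (fun _ => h • A) (fun _ => fun _ => t₀) x i
            = σ (t₀ + h * (A.mulVec x) i) := by
          show σ ((((h • A).mulVec x + fun _ => t₀ : Fin N → ℝ)) i) = _
          simp [Matrix.smul_mulVec]
          ring_nf
        have hui : |h * (A.mulVec x) i| ≤ s₀ := by
          rw [abs_mul, abs_of_pos hh]
          have h1 : |(A.mulVec x) i| ≤ C :=
            le_trans (norm_le_pi_norm (A.mulVec x) i) (hC x hx)
          calc h * |(A.mulVec x) i| ≤ h * C :=
                mul_le_mul_of_nonneg_left h1 hh.le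
            _ = s₀ * (C / (C + 1)) := by rw [hhdef]; ring
            _ ≤ s₀ * 1 := by
                apply mul_le_mul_of_nonneg_left _ hs₀.le
                rw [div_le_one hCpos]; linarith
            _ = s₀ := mul_one s₀
        have hbound := hσs _ hui
        have : sigmaForward σ 1 (fun _ => h • A) (fun _ => fun _ => t₀) x i
            - (((c * h) • A.mulVec x + fun _ => σ t₀ : Fin N → ℝ)) i
            = σ (t₀ + h * (A.mulVec x) i) - σ t₀ - c * (h * (A.mulVec x) i) := by
          rw [hforward]
          simp [Pi.add_apply, Pi.smul_apply, smul_eq_mul]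
          ring
        rw [Real.norm_eq_abs, Pi.sub_apply, this]
        calc |σ (t₀ + h * (A.mulVec x) i) - σ t₀ - c * (h * (A.mulVec x) i)|
            ≤ η * |h * (A.mulVec x) i| := hbound
          _ ≤ η * (h * C) := by
              apply mul_le_mul_of_nonneg_left _ hη.le
              rw [abs_mul, abs_of_pos hh]
              exact mul_le_mul_of_nonneg_left
                (le_trans (norm_le_pi_norm (A.mulVec x) i) (hC x hx)) hh.le
          _ ≤ ε * (|c| * h) := by
              rw [hηdef]
              rw [div_mul_eq_mul_div, div_le_iff₀ hCpos]
              nlinarith [mul_pos hε (abs_pos.mpr hc), hh.le]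
    · -- inductive case
      have hspL' : ∀ B ∈ L', IsGSparse G B := fun B hB => hsp B (List.mem_cons_of_mem A hB)
      set P := L'.prod with hPdef
      set S := ∑ i, ∑ j, |A i j| with hSdef
      have hS0 : 0 ≤ S := Finset.sum_nonneg fun i _ => Finset.sum_nonneg fun j _ => abs_nonneg _
      clear_value S
      obtain ⟨C, hC0, hC⟩ := compact_mulVec_bound hK (A * P)
      have hcS : (0:ℝ) < |c| * S + 1 := by positivity
      set ε' := ε * |c| / (2 * (|c| * S + 1)) with hε'def
      clear_value ε'
      have hε' : 0 < ε' := by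
        rw [hε'def]
        apply div_pos (mul_pos hε (abs_pos.mpr hc)); positivity
      obtain ⟨m', W', bb', s', hs', hWsp', hF⟩ := ih hL' hspL' K hK ε' hε'
      set D := C + S * ε' + 1 with hDdef
      clear_value D
      have hD : (0:ℝ) < D := by rw [hDdef]; positivity
      set η := ε * |c| / (2 * D) with hηdef
      clear_value η
      have hη : 0 < η := by
        rw [hηdef]; apply div_pos (mul_pos hε (abs_pos.mpr hc)); positivity
      obtain ⟨s₀, hs₀, hσs⟩ := hσ η hη
      set h := s₀ / D with hhdef
      clear_value h
      have hh : 0 < h := hhdef ▸ div_pos hs₀ hD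
      have hhD : h * D = s₀ := by rw [hhdef]; exact div_mul_cancel₀ _ (ne_of_gt hD)
      set sc : Fin N → ℝ := fun _ => σ t₀ with hscdef
      set tc : Fin N → ℝ := fun _ => t₀ with htcdef
      set Wo := (h / s') • A with hWo
      set bo := tc - Wo.mulVec sc with hbo
      clear_value sc tc Wo bo
      refine ⟨m' + 1, Fin.snoc W' Wo, Fin.snoc bb' bo, c * h, mul_ne_zero hc (ne_of_gt hh), ?_, ?_⟩
      · intro ℓ
        refine Fin.lastCases ?_ ?_ ℓ
        · rw [Fin.snoc_last, hWo]; exact isGSparse_smul hA _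
        · intro k; rw [Fin.snoc_castSucc]; exact hWsp' k
      · intro x hx
        set F := sigmaForward σ m' W' bb' x with hFdef
        clear_value F
        have he : ‖F - (s' • P.mulVec x + sc)‖ ≤ ε' * |s'| := by rw [hFdef]; exact hF x hx
        set e := F - (s' • P.mulVec x + sc) with hedef
        clear_value e
        have hFe : F = e + (s' • P.mulVec x + sc) := by rw [hedef]; abel
        set y := A.mulVec (P.mulVec x) with hydef
        clear_value y
        have hyC : ‖y‖ ≤ C := by rw [hydef, Matrix.mulVec_mulVec]; exact hC x hx
        set q2 := (h / s') • A.mulVec e with hq2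
        set u := h • y + q2 with hu
        clear_value q2 u
        have hinput : Wo.mulVec F + bo = tc + u := by
          have w1 : Wo.mulVec (s' • P.mulVec x) = h • y := by
            rw [hWo, Matrix.smul_mulVec, Matrix.mulVec_smul, smul_smul,
              div_mul_cancel₀ _ hs', hydef]
          have w2 : Wo.mulVec e = q2 := by rw [hWo, Matrix.smul_mulVec, hq2]
          rw [hbo, hFe, Matrix.mulVec_add, Matrix.mulVec_add, w1, w2, hu]
          abel
        have hq2n : ‖q2‖ ≤ h * (S * ε') := by
          rw [hq2, norm_smul, Real.norm_eq_abs, abs_div, abs_of_pos hh]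
          have habs' : |s'| ≠ 0 := abs_ne_zero.mpr hs'
          calc h / |s'| * ‖A.mulVec e‖ ≤ h / |s'| * (S * (ε' * |s'|)) := by
                apply mul_le_mul_of_nonneg_left _ (by positivity)
                exact le_trans (by rw [hSdef]; exact mulVec_norm_le A e) (mul_le_mul_of_nonneg_left he hS0)
            _ = h * (S * ε') := by field_simp
        have hun : ‖u‖ ≤ h * D := by
          calc ‖u‖ ≤ ‖h • y‖ + ‖q2‖ := by rw [hu]; exact norm_add_le _ _
            _ ≤ h * C + h * (S * ε') := by
                apply add_le_add _ hq2n
                rw [norm_smul, Real.norm_eq_abs, abs_of_pos hh]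
                exact mul_le_mul_of_nonneg_left hyC hh.le
            _ ≤ h * D := by rw [hDdef]; nlinarith
        have hus : ‖u‖ ≤ s₀ := by rw [← hhD]; exact hun
        have hprodc : (A :: L').prod = A * P := by rw [List.prod_cons]
        rw [sigmaForward_snoc, ← hFdef, hprodc]
        have habs : |c * h| = |c| * h := by rw [abs_mul, abs_of_pos hh]
        rw [habs, pi_norm_le_iff_of_nonneg (by positivity)]
        intro i
        rw [Pi.sub_apply, Real.norm_eq_abs]
        have hlayer : sigmaLayer σ Wo bo F i = σ (t₀ + u i) := by
          show σ ((Wo.mulVec F + bo) i) = σ (t₀ + u i)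
          rw [hinput, Pi.add_apply, htcdef]
        have hui : |u i| ≤ s₀ := le_trans (norm_le_pi_norm u i) hus
        have huhD : |u i| ≤ h * D := le_trans (norm_le_pi_norm u i) hun
        have hq2i : |q2 i| ≤ h * (S * ε') := le_trans (norm_le_pi_norm q2 i) hq2n
        have hyi : ((A * P).mulVec x) i = y i := by rw [hydef, Matrix.mulVec_mulVec]
        have hui2 : u i = h * y i + q2 i := by
          rw [hu]; simp [Pi.add_apply, Pi.smul_apply, smul_eq_mul]
        have hdiff : sigmaLayer σ Wo bo F i - (((c * h) • (A * P).mulVec x + sc) i)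
            = (σ (t₀ + u i) - σ t₀ - c * u i) + c * q2 i := by
          rw [hlayer]
          simp only [Pi.add_apply, Pi.smul_apply, smul_eq_mul, hyi, hscdef]
          rw [hui2]
          ring
        rw [hdiff]
        have e1 : η * D = ε * |c| / 2 := by
          rw [hηdef]; field_simp
        have e2 : (|c| * S + 1) * ε' = ε * |c| / 2 := by
          rw [hε'def]; field_simp
        calc |(σ (t₀ + u i) - σ t₀ - c * u i) + c * q2 i|
            ≤ |σ (t₀ + u i) - σ t₀ - c * u i| + |c * q2 i| := abs_add_le _ _
          _ ≤ η * |u i| + |c| * (h * (S * ε')) := by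
              apply add_le_add (hσs _ hui)
              rw [abs_mul]
              exact mul_le_mul_of_nonneg_left hq2i (abs_nonneg c)
          _ ≤ η * (h * D) + |c| * (h * (S * ε')) := by
              apply add_le_add (mul_le_mul_of_nonneg_left huhD hη.le) le_rfl
          _ ≤ ε * (|c| * h) := by
              have k1 : η * (h * D) = h * (ε * |c| / 2) := by
                rw [← mul_assoc, mul_comm η h, mul_assoc, e1]
              have k2 : |c| * (h * (S * ε')) ≤ h * (ε * |c| / 2) := by
                rw [← e2]
                have : |c| * (S * ε') ≤ (|c| * S + 1) * ε' := by nlinarith [hε'.le]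
                nlinarith [hh.le]
              rw [k1]
              nlinarith [hh.le]

/-- Universal approximation by `G`-sparse `σ`-networks: if `G` is connected and `σ` is `C¹`
near some `t₀` with `σ'(t₀) ≠ 0`, then every invertible linear map `x ↦ M x` can be
approximated, uniformly in the sup norm on a nonempty compact set `K`, to within any `ε > 0`
by a finite-depth feedforward `σ`-network (hidden layers `z ↦ σ(W z + b)` followed by a
final affine map) all of whose weight matrices are `G`-sparse. -/
theorem sparse_sigma_network_universal_approximation {N : ℕ}
    (G : SimpleGraph (Fin N)) (hG : G.Connected)
    (σ : ℝ → ℝ) (t₀ a b : ℝ) (ht₀ : t₀ ∈ Set.Ioo a b)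
    (hσ : ContDiffOn ℝ 1 σ (Set.Ioo a b)) (hd : deriv σ t₀ ≠ 0)
    (M : Matrix (Fin N) (Fin N) ℝ) (hM : IsUnit M)
    (K : Set (Fin N → ℝ)) (hK : IsCompact K) (hKne : K.Nonempty)
    (ε : ℝ) (hε : 0 < ε) :
    ∃ (m : ℕ) (W : Fin m → Matrix (Fin N) (Fin N) ℝ) (bb : Fin m → (Fin N → ℝ))
      (Wfin : Matrix (Fin N) (Fin N) ℝ) (bfin : Fin N → ℝ),
      (∀ ℓ, IsGSparse G (W ℓ)) ∧ IsGSparse G Wfin ∧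
      ∀ x ∈ K, ‖Wfin.mulVec (sigmaForward σ m W bb x) + bfin - M.mulVec x‖ < ε := by
  -- derivative setup
  set c := deriv σ t₀ with hcdef
  have hmem : Set.Ioo a b ∈ nhds t₀ := isOpen_Ioo.mem_nhds ht₀
  have hder : HasDerivAt σ c t₀ :=
    ((hσ.contDiffAt hmem).differentiableAt one_ne_zero).hasDerivAt
  have hσ' : ∀ η : ℝ, 0 < η → ∃ s₀ > (0:ℝ), ∀ s : ℝ, |s| ≤ s₀ →
      |σ (t₀ + s) - σ t₀ - c * s| ≤ η * |s| := by
    intro η hη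
    have hlo := hasDerivAt_iff_isLittleO.mp hder
    have hev := hlo.def hη
    rw [Metric.eventually_nhds_iff] at hev
    obtain ⟨δ, hδ, hball⟩ := hev
    refine ⟨δ / 2, by positivity, fun s hs => ?_⟩
    have hdist : dist (t₀ + s) t₀ < δ := by
      rw [Real.dist_eq]
      have : |t₀ + s - t₀| = |s| := by ring_nf
      rw [this]; linarith
    have := hball hdist
    simpa [Real.norm_eq_abs, mul_comm, smul_eq_mul, add_sub_cancel_left] using this
  -- factor M into G-sparse matrices
  obtain ⟨L, hLne, hLsp, hLprod⟩ := matrix_factor hG M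
  obtain ⟨B, L', rfl⟩ : ∃ (B : Matrix (Fin N) (Fin N) ℝ) (L' : List _), L = B :: L' :=
    ⟨L.head (by exact hLne), L.tail, (List.cons_head_tail hLne).symm⟩
  have hBsp : IsGSparse G B := hLsp B (List.mem_cons_self)
  by_cases hL' : L' = []
  · -- M itself is G-sparse: no hidden layers needed
    subst hL'
    have hMB : M = B := by rw [← hLprod]; simp
    refine ⟨0, fun ℓ => ℓ.elim0, fun ℓ => ℓ.elim0, M, 0, fun ℓ => ℓ.elim0,
      hMB ▸ hBsp, fun x hx => ?_⟩
    have : sigmaForward σ 0 (fun ℓ => ℓ.elim0) (fun ℓ => ℓ.elim0) x = x := rfl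
    rw [this]
    simpa using hε
  · -- general case
    set SB := ∑ i, ∑ j, |B i j| with hSBdef
    have hSB0 : 0 ≤ SB := Finset.sum_nonneg fun i _ => Finset.sum_nonneg fun j _ => abs_nonneg _
    have hSBn : ∀ v : Fin N → ℝ, ‖B.mulVec v‖ ≤ SB * ‖v‖ := fun v => mulVec_norm_le B v
    clear_value SB
    have hSBpos : (0:ℝ) < SB + 1 := by positivity
    set ε' := ε / (2 * (SB + 1)) with hε'def
    have hε' : 0 < ε' := by rw [hε'def]; positivity
    clear_value ε'
    have hspL' : ∀ A ∈ L', IsGSparse G A := fun A hA => hLsp A (List.mem_cons_of_mem B hA)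
    obtain ⟨m, W, bb, s', hs', hWsp, hF⟩ :=
      network_claim G σ t₀ c hd hσ' L' hL' hspL' K hK ε' hε'
    set P := L'.prod with hPdef
    refine ⟨m, W, bb, s'⁻¹ • B, -((s'⁻¹ • B).mulVec (fun _ => σ t₀)), hWsp,
      isGSparse_smul hBsp _, fun x hx => ?_⟩
    have hMx : M.mulVec x = s'⁻¹ • B.mulVec (s' • P.mulVec x) := by
      rw [Matrix.mulVec_smul, smul_smul, inv_mul_cancel₀ hs', one_smul,
        Matrix.mulVec_mulVec, ← List.prod_cons, hLprod]
    set F := sigmaForward σ m W bb x with hFdef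
    have he := hF x hx
    rw [← hFdef] at he
    have hkey : (s'⁻¹ • B).mulVec F + -((s'⁻¹ • B).mulVec (fun _ => σ t₀)) - M.mulVec x
        = s'⁻¹ • B.mulVec (F - (s' • P.mulVec x + fun _ => σ t₀)) := by
      rw [hMx, Matrix.smul_mulVec, Matrix.smul_mulVec,
        Matrix.mulVec_sub, Matrix.mulVec_add]
      rw [smul_sub, smul_add]
      abel
    rw [hkey]
    have hnorm : ‖s'⁻¹ • B.mulVec (F - (s' • P.mulVec x + fun _ => σ t₀))‖
        ≤ |s'|⁻¹ * (SB * (ε' * |s'|)) := by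
      rw [norm_smul, Real.norm_eq_abs, abs_inv]
      apply mul_le_mul_of_nonneg_left _ (by positivity)
      exact le_trans (hSBn _) (mul_le_mul_of_nonneg_left he hSB0)
    have habs : |s'| ≠ 0 := abs_ne_zero.mpr hs'
    have heq : |s'|⁻¹ * (SB * (ε' * |s'|)) = SB * ε' := by field_simp
    have hlt : SB * ε' < ε := by
      have h1 : SB * ε' ≤ (SB + 1) * ε' := by nlinarith [hε'.le]
      have h2 : (SB + 1) * ε' = ε / 2 := by rw [hε'def]; field_simp
      linarith
    calc ‖s'⁻¹ • B.mulVec (F - (s' • P.mulVec x + fun _ => σ t₀))‖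
        ≤ SB * ε' := by rw [← heq]; exact hnorm
      _ < ε := hlt
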